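/- Let V be a real vector space, let B : V × V → V be a symmetric bilinear map, and let λ : V → ℝ be a function with λ(0) = 0 such that B(v,v) = λ(v)·v for every v ∈ V. Then λ is linear, i.e. λ(α·v) = α·λ(v) and λ(v₁ + v₂) = λ(v₁) + λ(v₂) for all α ∈ ℝ and all v, v₁, v₂ ∈ V. -/
import Mathlib


/-- step (13.16)–(13.17) in the proof of Theorem 13.2. If a
symmetric bilinear map `B : V × V → V` satisfies `B(v,v) = λ(v)·v` for a function
`λ` with `λ(0) = 0`, then `λ` is linear. -/
theorem stmt16 (V : Type*) [AddCommGroup V] [Module ℝ V]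
    (B : V →ₗ[ℝ] V →ₗ[ℝ] V) (hBsymm : ∀ v w : V, B v w = B w v)
    (lam : V → ℝ) (hlam0 : lam 0 = 0)
    (hB : ∀ v : V, B v v = lam v • v) :
    (∀ (α : ℝ) (v : V), lam (α • v) = α * lam v) ∧
    (∀ v₁ v₂ : V, lam (v₁ + v₂) = lam v₁ + lam v₂) := by
  have cancel : ∀ (x y : ℝ) (v : V), v ≠ 0 → x • v = y • v → x = y := by
    intro x y v hv h
    have : (x - y) • v = 0 := by rw [sub_smul, h, sub_self]
    rcases smul_eq_zero.mp this with h' | h'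
    · linarith [sub_eq_zero.mp (by linarith [h'] : x - y = 0)]
    · exact absurd h' hv
  have hhom : ∀ (α : ℝ) (v : V), lam (α • v) = α * lam v := by
    intro α v
    by_cases hv : v = 0
    · simp [hv, hlam0]
    by_cases hα : α = 0
    · simp [hα, hlam0]
    have h1 : B (α • v) (α • v) = lam (α • v) • (α • v) := hB _
    have h2 : B (α • v) (α • v) = (α * α * lam v) • v := by
      simp only [map_smul, LinearMap.smul_apply, hB v, smul_smul, mul_assoc]
    have h3 : (lam (α • v) * α) • v = (α * α * lam v) • v := by
      rw [← smul_smul, ← h1, h2]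
    have h4 := cancel _ _ v hv h3
    have : α * lam (α • v) = α * (α * lam v) := by ring_nf; ring_nf at h4; linarith
    exact mul_left_cancel₀ hα this
  refine ⟨hhom, ?_⟩
  intro v₁ v₂
  by_cases h0 : v₁ = 0
  · simp [h0, hlam0]
  by_cases hc : ∃ c : ℝ, v₂ = c • v₁
  · obtain ⟨c, rfl⟩ := hc
    have : v₁ + c • v₁ = (1 + c) • v₁ := by module
    rw [this, hhom, hhom]
    ring
  -- independent case
  have key : (lam (v₁ + v₂) + lam (v₁ - v₂) - 2 * lam v₁) • v₁
      + (lam (v₁ + v₂) - lam (v₁ - v₂) - 2 * lam v₂) • v₂ = 0 := by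
    have e1 : B (v₁ + v₂) (v₁ + v₂) = lam (v₁ + v₂) • (v₁ + v₂) := hB _
    have e2 : B (v₁ - v₂) (v₁ - v₂) = lam (v₁ - v₂) • (v₁ - v₂) := hB _
    have e3 : B v₁ v₁ = lam v₁ • v₁ := hB _
    have e4 : B v₂ v₂ = lam v₂ • v₂ := hB _
    have hs : B v₁ v₂ = B v₂ v₁ := hBsymm _ _
    have expand1 : B (v₁ + v₂) (v₁ + v₂)
        = B v₁ v₁ + B v₁ v₂ + B v₂ v₁ + B v₂ v₂ := by
      simp [map_add, LinearMap.add_apply]; abel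
    have expand2 : B (v₁ - v₂) (v₁ - v₂)
        = B v₁ v₁ - B v₁ v₂ - B v₂ v₁ + B v₂ v₂ := by
      simp [map_sub, LinearMap.sub_apply]; abel
    have sum : lam (v₁ + v₂) • (v₁ + v₂) + lam (v₁ - v₂) • (v₁ - v₂)
        = (2 * lam v₁) • v₁ + (2 * lam v₂) • v₂ := by
      rw [← e1, ← e2, expand1, expand2, e3, e4]
      module
    linear_combination (norm := module) sum
  set a := lam (v₁ + v₂) + lam (v₁ - v₂) - 2 * lam v₁ with ha
  set b := lam (v₁ + v₂) - lam (v₁ - v₂) - 2 * lam v₂ with hb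
  have hb0 : b = 0 := by
    by_contra hbne
    apply hc
    refine ⟨-a / b, ?_⟩
    have hbv : b • v₂ = (-a) • v₁ := by
      linear_combination (norm := module) key
    have := congrArg (fun x => b⁻¹ • x) hbv
    simp only [smul_smul, inv_mul_cancel₀ hbne, one_smul] at this
    rw [this]
    congr 1
    field_simp
  have ha0 : a = 0 := by
    rw [hb0, zero_smul, add_zero] at key
    rcases smul_eq_zero.mp key with h | h
    · exact h
    · exact absurd h h0
  have := ha0; have := hb0
  rw [ha] at ha0; rw [hb] at hb0
  linarith
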